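/- arXiv:2205.11353 — 4 statements merged into one kernel-verified Lean document; each statement's English description precedes it below -/
import Mathlib

section
/- For any real numbers b and σ with σ > 0, the integral over all real t of Φ((b−t)/σ)·Φ((t−b)/σ) dt equals σ/√π, where Φ is the CDF of the standard normal distribution. -/
open MeasureTheory Real Filter
open scoped Topology

noncomputable def phi (t : ℝ) : ℝ := Real.exp (-t^2/2) / Real.sqrt (2*Real.pi)

noncomputable def Phi (x : ℝ) : ℝ := ∫ s in Set.Iic x, phi s

lemma phi_eq (t : ℝ) : phi t = (Real.sqrt (2*Real.pi))⁻¹ * Real.exp (-(2⁻¹) * t^2) := by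
  rw [phi, div_eq_mul_inv, mul_comm]
  congr 2
  ring

lemma phi_cont : Continuous phi := by
  unfold phi
  fun_prop

lemma phi_nonneg (t : ℝ) : 0 ≤ phi t := by
  unfold phi; positivity

lemma phi_even (t : ℝ) : phi (-t) = phi t := by
  unfold phi; congr 2; ring

lemma phi_int : Integrable phi := by
  have h := ((integrable_exp_neg_mul_sq (b := (2:ℝ)⁻¹) (by norm_num)).const_mul
    (Real.sqrt (2*Real.pi))⁻¹)
  have e : phi = fun t => (Real.sqrt (2*Real.pi))⁻¹ * Real.exp (-(2⁻¹) * t^2) := funext phi_eq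
  rw [e]; exact h

lemma integral_phi : ∫ t, phi t = 1 := by
  have e : phi = fun t => (Real.sqrt (2*Real.pi))⁻¹ * Real.exp (-(2⁻¹) * t^2) := funext phi_eq
  rw [e, integral_const_mul, integral_gaussian]
  rw [show Real.pi / 2⁻¹ = 2 * Real.pi by ring]
  exact inv_mul_cancel₀ (Real.sqrt_pos.mpr (by positivity)).ne'

lemma Phi_nonneg (x : ℝ) : 0 ≤ Phi x :=
  setIntegral_nonneg measurableSet_Iic (fun s _ => phi_nonneg s)

lemma Phi_le_one (x : ℝ) : Phi x ≤ 1 := by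
  rw [← integral_phi]
  exact setIntegral_le_integral phi_int (Eventually.of_forall phi_nonneg)

lemma Phi_neg (x : ℝ) : Phi (-x) = ∫ s in Set.Ioi x, phi s := by
  rw [Phi]
  have : ∫ s in Set.Iic (-x), phi s = ∫ s in Set.Iic (-x), phi (-s) := by
    simp [phi_even]
  rw [this, integral_comp_neg_Iic, neg_neg]

lemma Phi_add_Phi_neg (x : ℝ) : Phi x + Phi (-x) = 1 := by
  rw [Phi_neg, Phi, intervalIntegral.integral_Iic_add_Ioi phi_int.integrableOn phi_int.integrableOn,
    integral_phi]

lemma Phi_zero : Phi 0 = 1/2 := by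
  have := Phi_add_Phi_neg 0
  rw [neg_zero] at this
  linarith

lemma hasDerivAt_Phi (x : ℝ) : HasDerivAt Phi (phi x) x := by
  have h : ∀ y, Phi y = Phi 0 + ∫ t in (0:ℝ)..y, phi t := by
    intro y
    rw [← intervalIntegral.integral_Iic_sub_Iic phi_int.integrableOn phi_int.integrableOn]
    show Phi y = Phi 0 + (Phi y - Phi 0)
    ring
  have hd : HasDerivAt (fun y => Phi 0 + ∫ t in (0:ℝ)..y, phi t) (phi x) x := by
    refine HasDerivAt.const_add _ ?_
    exact intervalIntegral.integral_hasDerivAt_right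
      phi_int.intervalIntegrable
      phi_cont.stronglyMeasurable.stronglyMeasurableAtFilter
      phi_cont.continuousAt
  exact hd.congr_of_eventuallyEq (Eventually.of_forall h)

lemma Phi_cont : Continuous Phi :=
  continuous_iff_continuousAt.mpr fun x => (hasDerivAt_Phi x).continuousAt

lemma integral_Iic_comp_add_right (f : ℝ → ℝ) (a c : ℝ) :
    ∫ s in Set.Iic a, f (s + c) = ∫ s in Set.Iic (a + c), f s := by
  have A : MeasurableEmbedding (fun x : ℝ => x + c) :=
    (Homeomorph.addRight c).isClosedEmbedding.measurableEmbedding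
  have h := A.setIntegral_map (μ := volume) f (Set.Iic (a + c))
  rw [map_add_right_eq_self] at h
  rw [h, Set.preimage_add_const_Iic, add_sub_cancel_right]

lemma Phi_neg_le {u : ℝ} (hu : 0 ≤ u) : Phi (-u) ≤ Real.exp (-u^2/2) / 2 := by
  have key : ∀ s ∈ Set.Iic (-u), phi s ≤ Real.exp (-u^2/2) * phi (s + u) := by
    intro s hs
    simp only [Set.mem_Iic] at hs
    unfold phi
    rw [← mul_div_assoc, ← Real.exp_add]
    gcongr
    nlinarith [mul_nonneg hu (by linarith : (0:ℝ) ≤ -(s+u))]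
  have h1 : Phi (-u) ≤ ∫ s in Set.Iic (-u), Real.exp (-u^2/2) * phi (s + u) := by
    apply setIntegral_mono_on phi_int.integrableOn ?_ measurableSet_Iic key
    exact ((phi_int.comp_add_right u).const_mul _).integrableOn
  calc Phi (-u) ≤ _ := h1
    _ = Real.exp (-u^2/2) / 2 := by
        rw [integral_const_mul, integral_Iic_comp_add_right phi (-u) u, neg_add_cancel]
        rw [show (∫ s in Set.Iic (0:ℝ), phi s) = Phi 0 from rfl, Phi_zero]
        ring

lemma Phi_pos_le {u : ℝ} (hu : u ≤ 0) : Phi u ≤ Real.exp (-u^2/2) / 2 := by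
  have := Phi_neg_le (u := -u) (by linarith)
  rw [neg_neg] at this
  simpa [neg_sq] using this

lemma f_le (u : ℝ) : Phi u * Phi (-u) ≤ Real.exp (-u^2/2) / 2 := by
  rcases le_total 0 u with hu | hu
  · calc Phi u * Phi (-u) ≤ 1 * (Real.exp (-u^2/2) / 2) :=
        mul_le_mul (Phi_le_one u) (Phi_neg_le hu) (Phi_nonneg _) zero_le_one
      _ = _ := one_mul _
  · calc Phi u * Phi (-u) ≤ (Real.exp (-u^2/2) / 2) * 1 :=
        mul_le_mul (Phi_pos_le hu) (Phi_le_one _) (Phi_nonneg _) (by positivity)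
      _ = _ := mul_one _

lemma f_int : Integrable (fun u => Phi u * Phi (-u)) := by
  apply Integrable.mono'
    (g := fun u => Real.exp (-(2⁻¹) * u^2) / 2)
    ((integrable_exp_neg_mul_sq (b := (2:ℝ)⁻¹) (by norm_num)).div_const 2)
    ((Phi_cont.mul (Phi_cont.comp continuous_neg)).aestronglyMeasurable)
  refine Eventually.of_forall fun u => ?_
  show ‖Phi u * Phi (-u)‖ ≤ Real.exp (-(2⁻¹) * u^2) / 2
  rw [Real.norm_eq_abs, abs_of_nonneg (mul_nonneg (Phi_nonneg _) (Phi_nonneg _))]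
  calc Phi u * Phi (-u) ≤ Real.exp (-u^2/2) / 2 := f_le u
    _ = Real.exp (-(2⁻¹) * u^2) / 2 := by ring_nf

lemma hasDerivAt_phi (x : ℝ) : HasDerivAt phi (-x * phi x) x := by
  have h : HasDerivAt (fun t : ℝ => -t^2/2) (-x) x := by
    have := ((hasDerivAt_pow 2 x).neg.div_const 2)
    refine this.congr_deriv ?_
    symm
    simp
    ring
  have h2 := (h.exp).div_const (Real.sqrt (2*Real.pi))
  refine h2.congr_deriv ?_
  unfold phi
  ring

lemma hasDerivAt_Phi_neg (x : ℝ) : HasDerivAt (fun u => Phi (-u)) (-(phi x)) x := by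
  have := (hasDerivAt_Phi (-x)).comp x (hasDerivAt_neg x)
  simp only [phi_even, mul_neg_one] at this
  exact this

lemma phi_sqrt_two (u : ℝ) : phi (Real.sqrt 2 * u) = Real.exp (-u^2) / Real.sqrt (2*Real.pi) := by
  unfold phi
  congr 2
  rw [mul_pow, Real.sq_sqrt (by norm_num : (0:ℝ) ≤ 2)]
  ring

noncomputable def Fa : ℝ → ℝ := fun u =>
  u * (Phi u * Phi (-u)) - phi u * (Phi u - Phi (-u))
    + (Real.sqrt Real.pi)⁻¹ * Phi (Real.sqrt 2 * u)

lemma hasDerivAt_Fa (u : ℝ) : HasDerivAt Fa (Phi u * Phi (-u)) u := by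
  have hP := hasDerivAt_Phi u
  have hPn := hasDerivAt_Phi_neg u
  have hphi := hasDerivAt_phi u
  have hPs : HasDerivAt (fun u => Phi (Real.sqrt 2 * u))
      (phi (Real.sqrt 2 * u) * Real.sqrt 2) u := by
    have h := (hasDerivAt_Phi (Real.sqrt 2 * u)).comp u
      ((hasDerivAt_id u).const_mul (Real.sqrt 2))
    simpa [Function.comp_def] using h
  have hD := (((hasDerivAt_id u).mul (hP.mul hPn)).sub (hphi.mul (hP.sub hPn))).add
    ((hPs.const_mul ((Real.sqrt Real.pi)⁻¹)))
  refine hD.congr_deriv ?_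
  symm
  rw [phi_sqrt_two]
  have h2 : phi u * phi u = Real.exp (-u^2) / (2 * Real.pi) := by
    unfold phi
    rw [div_mul_div_comm, ← Real.exp_add, Real.mul_self_sqrt (by positivity)]
    congr 2
    ring
  have hs : Real.sqrt (2 * Real.pi) = Real.sqrt 2 * Real.sqrt Real.pi :=
    Real.sqrt_mul (by norm_num) _
  have hpi : Real.sqrt Real.pi * Real.sqrt Real.pi = Real.pi :=
    Real.mul_self_sqrt Real.pi_pos.le
  have hspos : (0:ℝ) < Real.sqrt Real.pi := Real.sqrt_pos.mpr Real.pi_pos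
  have h2pos : (0:ℝ) < Real.sqrt 2 := by positivity
  have h3 : (Real.sqrt Real.pi)⁻¹ * (Real.exp (-u^2) / Real.sqrt (2*Real.pi) * Real.sqrt 2)
      = Real.exp (-u^2) / Real.pi := by
    rw [hs]
    field_simp
    linear_combination -hpi
  rw [h3]
  simp only [id_eq, one_mul, Pi.mul_apply, Pi.sub_apply]
  linear_combination 2 * h2

lemma exp_half_tendsto : Tendsto (fun x : ℝ => Real.exp (-(1/2) * x)) atTop (𝓝 0) := by
  have h := Real.tendsto_exp_neg_atTop_nhds_zero.comp
    (Tendsto.const_mul_atTop (by norm_num : (0:ℝ) < 1/2) tendsto_id)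
  simpa [Function.comp_def, neg_mul] using h

lemma sq_tendsto_top : Tendsto (fun u : ℝ => u^2) atTop atTop :=
  tendsto_pow_atTop (by norm_num)

lemma sq_tendsto_bot : Tendsto (fun u : ℝ => u^2) atBot atTop := by
  have h := sq_tendsto_top.comp tendsto_neg_atBot_atTop
  refine h.congr fun u => ?_
  simp [Function.comp_def]

lemma exp_sq_top : Tendsto (fun u : ℝ => Real.exp (-u^2/2)) atTop (𝓝 0) := by
  have h := Real.tendsto_exp_atBot.comp
    ((tendsto_neg_atTop_atBot.comp sq_tendsto_top).atBot_div_const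
      (by norm_num : (0:ℝ) < 2))
  simpa [Function.comp_def] using h

lemma exp_sq_bot : Tendsto (fun u : ℝ => Real.exp (-u^2/2)) atBot (𝓝 0) := by
  have h := Real.tendsto_exp_atBot.comp
    ((tendsto_neg_atTop_atBot.comp sq_tendsto_bot).atBot_div_const
      (by norm_num : (0:ℝ) < 2))
  simpa [Function.comp_def] using h

lemma mul_exp_top : Tendsto (fun u : ℝ => u * Real.exp (-u^2/2)) atTop (𝓝 0) := by
  have h := (rpow_mul_exp_neg_mul_sq_isLittleO_exp_neg
    (by norm_num : (0:ℝ) < 2⁻¹) 1).isBigO.trans_tendsto exp_half_tendsto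
  have e : (fun x : ℝ => x ^ (1:ℝ) * Real.exp (-2⁻¹ * x ^ 2))
      = fun u : ℝ => u * Real.exp (-u^2/2) := by
    funext x
    rw [Real.rpow_one]
    ring_nf
  rwa [e] at h

lemma phi_top : Tendsto phi atTop (𝓝 0) := by
  have h := exp_sq_top.div_const (Real.sqrt (2*Real.pi))
  rw [zero_div] at h
  exact h

lemma phi_bot : Tendsto phi atBot (𝓝 0) := by
  have h := exp_sq_bot.div_const (Real.sqrt (2*Real.pi))
  rw [zero_div] at h
  exact h

lemma exp_sq_bot2 : Tendsto (fun u : ℝ => Real.exp (-u^2/2) / 2) atBot (𝓝 0) := by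
  have h := exp_sq_bot.div_const 2
  rwa [zero_div] at h

lemma exp_sq_top2 : Tendsto (fun u : ℝ => Real.exp (-u^2/2) / 2) atTop (𝓝 0) := by
  have h := exp_sq_top.div_const 2
  rwa [zero_div] at h

lemma Phi_bot : Tendsto Phi atBot (𝓝 0) := by
  apply squeeze_zero_norm' ?_ exp_sq_bot2
  filter_upwards [eventually_le_atBot (0:ℝ)] with u hu
  rw [Real.norm_eq_abs, abs_of_nonneg (Phi_nonneg u)]
  exact Phi_pos_le hu

lemma Phi_top : Tendsto Phi atTop (𝓝 1) := by
  have h1 : Tendsto (fun u => Phi (-u)) atTop (𝓝 0) := by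
    apply squeeze_zero_norm' ?_ exp_sq_top2
    filter_upwards [eventually_ge_atTop (0:ℝ)] with u hu
    rw [Real.norm_eq_abs, abs_of_nonneg (Phi_nonneg _)]
    exact Phi_neg_le hu
  have h2 : Tendsto (fun u => 1 - Phi (-u)) atTop (𝓝 (1 - 0)) := tendsto_const_nhds.sub h1
  rw [sub_zero] at h2
  refine h2.congr fun u => ?_
  have := Phi_add_Phi_neg u
  linarith

lemma gtop : Tendsto (fun u : ℝ => u * (Real.exp (-u^2/2) / 2)) atTop (𝓝 0) := by
  have h := mul_exp_top.div_const 2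
  rw [zero_div] at h
  exact h.congr fun u => by ring

lemma gbot : Tendsto (fun u : ℝ => -u * (Real.exp (-u^2/2) / 2)) atBot (𝓝 0) := by
  have h := gtop.comp tendsto_neg_atBot_atTop
  exact h.congr fun u => by simp [Function.comp_def, neg_sq]

lemma abs_Phi_sub (u : ℝ) : |Phi u - Phi (-u)| ≤ 1 := by
  rw [abs_sub_le_iff]
  constructor <;> nlinarith [Phi_nonneg u, Phi_nonneg (-u), Phi_le_one u, Phi_le_one (-u)]

lemma Fa_top : Tendsto Fa atTop (𝓝 ((Real.sqrt Real.pi)⁻¹)) := by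
  have L1 : Tendsto (fun u : ℝ => u * (Phi u * Phi (-u))) atTop (𝓝 0) := by
    apply squeeze_zero_norm' ?_ gtop
    filter_upwards [eventually_ge_atTop (0:ℝ)] with u hu
    have hp : 0 ≤ Phi u * Phi (-u) := mul_nonneg (Phi_nonneg _) (Phi_nonneg _)
    rw [Real.norm_eq_abs, abs_of_nonneg (mul_nonneg hu hp)]
    exact mul_le_mul_of_nonneg_left (f_le u) hu
  have L2 : Tendsto (fun u : ℝ => phi u * (Phi u - Phi (-u))) atTop (𝓝 0) := by
    apply squeeze_zero_norm ?_ phi_top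
    intro u
    rw [Real.norm_eq_abs, abs_mul, abs_of_nonneg (phi_nonneg u)]
    exact mul_le_of_le_one_right (phi_nonneg u) (abs_Phi_sub u)
  have L3 : Tendsto (fun u : ℝ => (Real.sqrt Real.pi)⁻¹ * Phi (Real.sqrt 2 * u)) atTop
      (𝓝 ((Real.sqrt Real.pi)⁻¹ * 1)) := by
    apply Tendsto.const_mul
    exact Phi_top.comp (Tendsto.const_mul_atTop (by positivity) tendsto_id)
  have h := (L1.sub L2).add L3
  unfold Fa
  simpa using h

lemma Fa_bot : Tendsto Fa atBot (𝓝 0) := by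
  have L1 : Tendsto (fun u : ℝ => u * (Phi u * Phi (-u))) atBot (𝓝 0) := by
    apply squeeze_zero_norm' ?_ gbot
    filter_upwards [eventually_le_atBot (0:ℝ)] with u hu
    have hp : 0 ≤ Phi u * Phi (-u) := mul_nonneg (Phi_nonneg _) (Phi_nonneg _)
    rw [Real.norm_eq_abs, abs_mul, abs_of_nonneg hp, abs_of_nonpos hu]
    exact mul_le_mul_of_nonneg_left (f_le u) (neg_nonneg.mpr hu)
  have L2 : Tendsto (fun u : ℝ => phi u * (Phi u - Phi (-u))) atBot (𝓝 0) := by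
    apply squeeze_zero_norm ?_ phi_bot
    intro u
    rw [Real.norm_eq_abs, abs_mul, abs_of_nonneg (phi_nonneg u)]
    exact mul_le_of_le_one_right (phi_nonneg u) (abs_Phi_sub u)
  have L3 : Tendsto (fun u : ℝ => (Real.sqrt Real.pi)⁻¹ * Phi (Real.sqrt 2 * u)) atBot
      (𝓝 ((Real.sqrt Real.pi)⁻¹ * 0)) := by
    apply Tendsto.const_mul
    exact Phi_bot.comp (Tendsto.const_mul_atBot (by positivity) tendsto_id)
  have h := (L1.sub L2).add L3
  unfold Fa
  simpa using h

lemma key : ∫ u : ℝ, Phi u * Phi (-u) = (Real.sqrt Real.pi)⁻¹ := by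
  have h := integral_of_hasDerivAt_of_tendsto hasDerivAt_Fa f_int Fa_bot Fa_top
  simpa using h

theorem stmt0 (b σ : ℝ) (hσ : 0 < σ) :
    ∫ t : ℝ, Phi ((b - t) / σ) * Phi ((t - b) / σ) = σ / Real.sqrt Real.pi := by
  have e : ∀ t : ℝ, Phi ((b - t) / σ) * Phi ((t - b) / σ)
      = (fun u => Phi (-u) * Phi u) ((t - b) / σ) := by
    intro t
    have h : (b - t) / σ = -((t - b) / σ) := by ring
    rw [h]
  simp_rw [e]
  have h1 : ∫ t : ℝ, (fun u => Phi (-u) * Phi u) ((t - b) / σ)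
      = ∫ t : ℝ, (fun u => Phi (-u) * Phi u) (t / σ) :=
    integral_sub_right_eq_self (fun t => (fun u => Phi (-u) * Phi u) (t / σ)) b
  rw [h1, Measure.integral_comp_div (fun u => Phi (-u) * Phi u) σ]
  have h2 : ∫ u : ℝ, Phi (-u) * Phi u = (Real.sqrt Real.pi)⁻¹ := by
    rw [← key]
    congr 1
    funext u
    exact mul_comm _ _
  rw [h2, abs_of_pos hσ, smul_eq_mul, div_eq_mul_inv]
end

section
/- Let A and B be finite multisets of real numbers of equal cardinality and σ > 0. If Σ_{a∈A} φ((x−a)/σ) = Σ_{b∈B} φ((x−b)/σ) for all real x, then for every natural number n, Σ_{a∈A} aⁿ = Σ_{b∈B} bⁿ. -/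
open MeasureTheory Real Filter

/-- The exponential character `t ↦ exp (v * t)` as a monoid hom. -/
noncomputable def myExpHom (v : ℝ) : Multiplicative ℝ →* ℝ where
  toFun t := Real.exp (v * Multiplicative.toAdd t)
  map_one' := by simp
  map_mul' a b := by simp [mul_add, Real.exp_add]

lemma myExpHom_injective : Function.Injective myExpHom := by
  intro a b hab
  have h1 := congrArg (fun f : Multiplicative ℝ →* ℝ => f (Multiplicative.ofAdd 1)) hab
  simpa [myExpHom, Real.exp_eq_exp] using h1

lemma exp_linindep (s : Finset ℝ) (c : ℝ → ℝ)
    (h : ∀ x : ℝ, ∑ v ∈ s, c v * Real.exp (v * x) = 0) :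
    ∀ v ∈ s, c v = 0 := by
  have li : LinearIndependent ℝ (fun v : ℝ => ⇑(myExpHom v)) :=
    (linearIndependent_monoidHom (Multiplicative ℝ) ℝ).comp myExpHom myExpHom_injective
  refine linearIndependent_iff'.mp li s c ?_
  funext t
  rw [Finset.sum_apply]
  simpa [myExpHom, smul_eq_mul] using h (Multiplicative.toAdd t)

lemma msum_eq (M : Multiset ℝ) (s : Finset ℝ) (hsub : M.toFinset ⊆ s) (f : ℝ → ℝ) :
    (M.map f).sum = ∑ v ∈ s, (M.count v : ℝ) * f v := by
  rw [Finset.sum_multiset_map_count, Finset.sum_subset hsub]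
  · exact Finset.sum_congr rfl fun v _ => (nsmul_eq_mul _ _)
  · intro v _ hv
    simp [Multiset.count_eq_zero_of_notMem (by simpa using hv)]

theorem stmt13 (A B : Multiset ℝ) (hcard : A.card = B.card) (σ : ℝ) (hσ : 0 < σ)
    (h : ∀ x : ℝ, (A.map (fun a => phi ((x - a) / σ))).sum =
      (B.map (fun b => phi ((x - b) / σ))).sum) :
    ∀ n : ℕ, (A.map (fun a => a ^ n)).sum = (B.map (fun b => b ^ n)).sum := by
  have hσ' : σ ≠ 0 := ne_of_gt hσ
  have hdecomp : ∀ x a : ℝ, phi ((x - a) / σ) =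
      (Real.exp (-x^2/(2*σ^2)) / Real.sqrt (2*Real.pi)) *
        (Real.exp (-a^2/(2*σ^2)) * Real.exp (a*x/σ^2)) := by
    intro x a
    unfold phi
    have hx : -((x - a)/σ)^2/2 = -x^2/(2*σ^2) + (-a^2/(2*σ^2) + a*x/σ^2) := by
      field_simp
      ring
    rw [hx, Real.exp_add, Real.exp_add]
    ring
  have h2 : ∀ x : ℝ,
      (A.map (fun a => Real.exp (-a^2/(2*σ^2)) * Real.exp (a*x/σ^2))).sum =
      (B.map (fun b => Real.exp (-b^2/(2*σ^2)) * Real.exp (b*x/σ^2))).sum := by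
    intro x
    have hK : Real.exp (-x^2/(2*σ^2)) / Real.sqrt (2*Real.pi) ≠ 0 :=
      ne_of_gt (div_pos (Real.exp_pos _) (Real.sqrt_pos.mpr (by positivity)))
    have hx := h x
    simp only [hdecomp x] at hx
    rw [Multiset.sum_map_mul_left, Multiset.sum_map_mul_left] at hx
    exact mul_left_cancel₀ hK hx
  set s : Finset ℝ := (A + B).toFinset with hs
  have hAs : A.toFinset ⊆ s := by
    intro v hv
    simp only [hs, Multiset.mem_toFinset, Multiset.mem_add] at *
    exact Or.inl (by simpa using hv)
  have hBs : B.toFinset ⊆ s := by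
    intro v hv
    simp only [hs, Multiset.mem_toFinset, Multiset.mem_add] at *
    exact Or.inr (by simpa using hv)
  have h3 : ∀ y : ℝ, ∑ v ∈ s,
      (((A.count v : ℝ) - B.count v) * Real.exp (-v^2/(2*σ^2))) * Real.exp (v * y) = 0 := by
    intro y
    have hx := h2 (σ^2 * y)
    have hsimp : ∀ a : ℝ, a * (σ^2 * y) / σ^2 = a * y := by
      intro a; field_simp
    simp only [hsimp] at hx
    rw [msum_eq A s hAs, msum_eq B s hBs] at hx
    have := sub_eq_zero.mpr hx
    rw [← Finset.sum_sub_distrib] at this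
    rw [← this]
    exact Finset.sum_congr rfl fun v _ => by ring
  have hcount : ∀ v ∈ s, (A.count v : ℝ) = B.count v := by
    intro v hv
    have := exp_linindep s _ h3 v hv
    have hwpos : Real.exp (-v^2/(2*σ^2)) ≠ 0 := Real.exp_ne_zero _
    have := (mul_eq_zero.mp this).resolve_right hwpos
    linarith [this]
  have hAB : A = B := by
    ext v
    by_cases hv : v ∈ s
    · exact_mod_cast hcount v hv
    · simp only [hs, Multiset.mem_toFinset, Multiset.mem_add, not_or] at hv
      rw [Multiset.count_eq_zero_of_notMem hv.1, Multiset.count_eq_zero_of_notMem hv.2]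
  intro n
  rw [hAB]
end

section
/- Let A and B be finite multisets of points in ℝ² of equal cardinality and σ > 0. If Σ_{(a,b)∈A} φ((x−a)/σ)·φ((y−b)/σ) = Σ_{(α,β)∈B} φ((x−α)/σ)·φ((y−β)/σ) for all (x,y) ∈ ℝ², then for all natural numbers m₁, m₂, Σ_{(a,b)∈A} a^{m₁} b^{m₂} = Σ_{(α,β)∈B} α^{m₁} β^{m₂}. -/
open MeasureTheory Real Filter

theorem stmt14 (A B : Multiset (ℝ × ℝ)) (hcard : A.card = B.card) (σ : ℝ) (hσ : 0 < σ)
    (h : ∀ x y : ℝ,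
      (A.map (fun p => phi ((x - p.1) / σ) * phi ((y - p.2) / σ))).sum =
      (B.map (fun p => phi ((x - p.1) / σ) * phi ((y - p.2) / σ))).sum) :
    ∀ m₁ m₂ : ℕ,
      (A.map (fun p => p.1 ^ m₁ * p.2 ^ m₂)).sum =
      (B.map (fun p => p.1 ^ m₁ * p.2 ^ m₂)).sum := by
  classical
  have hσ0 : σ ≠ 0 := hσ.ne'
  have hσ2 : σ ^ 2 ≠ 0 := pow_ne_zero _ hσ0
  set w : ℝ × ℝ → ℝ := fun p => Real.exp (-(p.1 ^ 2 + p.2 ^ 2) / (2 * σ ^ 2)) with hw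
  set χ : ℝ × ℝ → (Multiplicative (ℝ × ℝ) →* ℝ) := fun p =>
    { toFun := fun x => Real.exp (((Multiplicative.toAdd x).1 * p.1 +
        (Multiplicative.toAdd x).2 * p.2) / σ ^ 2)
      map_one' := by simp
      map_mul' := by
        intro x y
        rw [toAdd_mul, Prod.fst_add, Prod.snd_add, ← Real.exp_add]
        congr 1
        ring } with hχ
  have hterm : ∀ x y a b : ℝ, phi ((x - a) / σ) * phi ((y - b) / σ)
      = (Real.exp (-(x ^ 2 + y ^ 2) / (2 * σ ^ 2)) / (2 * Real.pi)) *
        (χ (a, b) (Multiplicative.ofAdd (x, y)) * w (a, b)) := by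
    intro x y a b
    simp only [phi, hχ, hw, MonoidHom.coe_mk, OneHom.coe_mk, toAdd_ofAdd]
    rw [div_mul_div_comm, Real.mul_self_sqrt (by positivity), ← Real.exp_add,
      ← Real.exp_add, div_mul_eq_mul_div, ← Real.exp_add]
    congr 1
    field_simp
    ring
  have key : ∀ x : Multiplicative (ℝ × ℝ),
      (A.map (fun p => w p * χ p x)).sum = (B.map (fun p => w p * χ p x)).sum := by
    intro x
    have h' := h (Multiplicative.toAdd x).1 (Multiplicative.toAdd x).2
    simp only [hterm] at h'
    have hx : Multiplicative.ofAdd ((Multiplicative.toAdd x).1, (Multiplicative.toAdd x).2)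
        = x := rfl
    rw [hx] at h'
    rw [Multiset.sum_map_mul_left, Multiset.sum_map_mul_left] at h'
    have hK : Real.exp (-((Multiplicative.toAdd x).1 ^ 2 + (Multiplicative.toAdd x).2 ^ 2) /
        (2 * σ ^ 2)) / (2 * Real.pi) ≠ 0 := by positivity
    have hmain := mul_left_cancel₀ hK h'
    calc (A.map fun p => w p * χ p x).sum
        = (A.map fun p => χ (p.1, p.2) x * w (p.1, p.2)).sum := by
          congr 1; apply Multiset.map_congr rfl; intro p _; rw [Prod.mk.eta, mul_comm]
      _ = (B.map fun p => χ (p.1, p.2) x * w (p.1, p.2)).sum := hmain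
      _ = (B.map fun p => w p * χ p x).sum := by
          congr 1; apply Multiset.map_congr rfl; intro p _; rw [Prod.mk.eta, mul_comm]
  -- injectivity of χ
  have hinj : Function.Injective χ := by
    intro p q hpq
    have h1 := DFunLike.congr_fun hpq (Multiplicative.ofAdd ((σ ^ 2 : ℝ), (0 : ℝ)))
    have h2 := DFunLike.congr_fun hpq (Multiplicative.ofAdd ((0 : ℝ), (σ ^ 2 : ℝ)))
    simp only [hχ, MonoidHom.coe_mk, OneHom.coe_mk, toAdd_ofAdd] at h1 h2
    have e1 : p.1 = q.1 := by
      have h1' := Real.exp_injective h1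
      field_simp at h1'
      simpa [hσ0] using h1'
    have e2 : p.2 = q.2 := by
      have h2' := Real.exp_injective h2
      field_simp at h2'
      simpa [hσ0] using h2'
    exact Prod.ext e1 e2
  have hli : LinearIndependent ℝ (fun p : ℝ × ℝ => ((χ p : Multiplicative (ℝ × ℝ) → ℝ))) :=
    (linearIndependent_monoidHom (Multiplicative (ℝ × ℝ)) ℝ).comp χ hinj
  set S : Finset (ℝ × ℝ) := A.toFinset ∪ B.toFinset with hS
  set c : ℝ × ℝ → ℝ := fun p => ((A.count p : ℝ) - (B.count p : ℝ)) * w p with hc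
  have hsum0 : (∑ p ∈ S, c p • ((χ p : Multiplicative (ℝ × ℝ) → ℝ))) = 0 := by
    funext x
    have hA : (A.map (fun p => w p * χ p x)).sum
        = ∑ p ∈ S, (A.count p : ℝ) * (w p * χ p x) := by
      have hext : ∑ p ∈ A.toFinset, (A.count p : ℝ) * (w p * χ p x)
          = ∑ p ∈ S, (A.count p : ℝ) * (w p * χ p x) :=
        Finset.sum_subset Finset.subset_union_left (fun p _ hp => by
          simp [Multiset.count_eq_zero_of_notMem (by simpa using hp)])
      rw [Finset.sum_multiset_map_count, ← hext]
      simp [nsmul_eq_mul]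
    have hB : (B.map (fun p => w p * χ p x)).sum
        = ∑ p ∈ S, (B.count p : ℝ) * (w p * χ p x) := by
      have hext : ∑ p ∈ B.toFinset, (B.count p : ℝ) * (w p * χ p x)
          = ∑ p ∈ S, (B.count p : ℝ) * (w p * χ p x) :=
        Finset.sum_subset Finset.subset_union_right (fun p _ hp => by
          simp [Multiset.count_eq_zero_of_notMem (by simpa using hp)])
      rw [Finset.sum_multiset_map_count, ← hext]
      simp [nsmul_eq_mul]
    have hz : ∑ p ∈ S, ((A.count p : ℝ) * (w p * χ p x)
        - (B.count p : ℝ) * (w p * χ p x)) = 0 := by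
      rw [Finset.sum_sub_distrib, ← hA, ← hB, key x, sub_self]
    simp only [Finset.sum_apply, Pi.smul_apply, smul_eq_mul, Pi.zero_apply, hc]
    calc ∑ p ∈ S, (((A.count p : ℝ) - (B.count p : ℝ)) * w p) * χ p x
        = ∑ p ∈ S, ((A.count p : ℝ) * (w p * χ p x)
            - (B.count p : ℝ) * (w p * χ p x)) := by
          apply Finset.sum_congr rfl; intro p _; ring
      _ = 0 := hz
  have hcount : ∀ p, A.count p = B.count p := by
    have hzero := linearIndependent_iff'.mp hli S c hsum0
    intro p
    by_cases hp : p ∈ S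
    · have h0 := hzero p hp
      have hwne : w p ≠ 0 := Real.exp_ne_zero _
      have hd : ((A.count p : ℝ) - (B.count p : ℝ)) = 0 := by
        rcases mul_eq_zero.mp h0 with h' | h'
        · exact h'
        · exact absurd h' hwne
      have : (A.count p : ℝ) = (B.count p : ℝ) := by linarith
      exact_mod_cast this
    · simp only [hS, Finset.mem_union, Multiset.mem_toFinset, not_or] at hp
      rw [Multiset.count_eq_zero_of_notMem hp.1, Multiset.count_eq_zero_of_notMem hp.2]
  have hAB : A = B := Multiset.ext.mpr hcount
  intro m₁ m₂
  rw [hAB]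
end

section
/- Let C and D be finite multisets of points in ℝ² lying strictly above the diagonal y = x (persistence diagrams) and σ > 0. If the unweighted persistence surfaces ρ_C(x,y) = Σ_{(b,d)∈C} φ((x−b)/σ)·φ((y−d)/σ) and ρ_D agree as functions on ℝ², then C = D as multisets. -/
open MeasureTheory Real Filter

noncomputable def chi15 (σ : ℝ) (p : ℝ × ℝ) : Multiplicative (ℝ × ℝ) →* ℝ where
  toFun v := Real.exp ((p.1 * v.toAdd.1 + p.2 * v.toAdd.2) / σ^2)
  map_one' := by simp
  map_mul' v w := by
    rw [toAdd_mul, Prod.fst_add, Prod.snd_add, ← Real.exp_add]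
    congr 1
    ring

lemma chi15_injective {σ : ℝ} (hσ : 0 < σ) : Function.Injective (chi15 σ) := by
  intro p q hpq
  have hσ2 : σ^2 ≠ 0 := by positivity
  have h1 := congrArg (fun f : Multiplicative (ℝ × ℝ) →* ℝ =>
    f (Multiplicative.ofAdd (σ^2, 0))) hpq
  have h2 := congrArg (fun f : Multiplicative (ℝ × ℝ) →* ℝ =>
    f (Multiplicative.ofAdd (0, σ^2))) hpq
  simp only [chi15, MonoidHom.coe_mk, OneHom.coe_mk, toAdd_ofAdd] at h1 h2
  have e1 : p.1 = q.1 := by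
    have := Real.exp_injective h1
    field_simp at this
    exact mul_right_cancel₀ hσ2 (by linear_combination this)
  have e2 : p.2 = q.2 := by
    have := Real.exp_injective h2
    field_simp at this
    exact mul_right_cancel₀ hσ2 (by linear_combination this)
  exact Prod.ext e1 e2

lemma phi_prod_eq (σ : ℝ) (hσ : 0 < σ) (x y b d : ℝ) :
    phi ((x - b) / σ) * phi ((y - d) / σ) =
      (Real.exp (-(x^2+y^2)/(2*σ^2)) / (2*Real.pi)) *
        (Real.exp (-(b^2+d^2)/(2*σ^2)) *
          Real.exp ((b*x+d*y)/σ^2)) := by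
  have hπ : (0:ℝ) ≤ 2 * Real.pi := by positivity
  have hs : Real.sqrt (2*Real.pi) * Real.sqrt (2*Real.pi) = 2*Real.pi :=
    Real.mul_self_sqrt hπ
  have hσ2 : σ^2 ≠ 0 := by positivity
  unfold phi
  rw [div_mul_div_comm, hs, ← Real.exp_add, ← Real.exp_add, div_mul_eq_mul_div,
    ← Real.exp_add]
  congr 1
  field_simp
  ring

theorem stmt15 (C D : Multiset (ℝ × ℝ)) (hC : ∀ p ∈ C, p.1 < p.2)
    (hD : ∀ p ∈ D, p.1 < p.2) (σ : ℝ) (hσ : 0 < σ)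
    (h : ∀ x y : ℝ,
      (C.map (fun p => phi ((x - p.1) / σ) * phi ((y - p.2) / σ))).sum =
      (D.map (fun p => phi ((x - p.1) / σ) * phi ((y - p.2) / σ))).sum) :
    C = D := by
  classical
  set w : ℝ × ℝ → ℝ := fun p => Real.exp (-(p.1^2+p.2^2)/(2*σ^2)) with hw
  -- Step 1: reduce to equality of exponential sums
  have key : ∀ v : Multiplicative (ℝ × ℝ),
      (C.map (fun p => w p * chi15 σ p v)).sum =
      (D.map (fun p => w p * chi15 σ p v)).sum := by
    intro v
    set x := v.toAdd.1 with hx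
    set y := v.toAdd.2 with hy
    have hxy := h x y
    have hK : Real.exp (-(x^2+y^2)/(2*σ^2)) / (2*Real.pi) ≠ 0 := by
      positivity
    have expand : ∀ (M : Multiset (ℝ × ℝ)),
        (M.map (fun p => phi ((x - p.1) / σ) * phi ((y - p.2) / σ))).sum =
        (Real.exp (-(x^2+y^2)/(2*σ^2)) / (2*Real.pi)) *
          (M.map (fun p => w p * chi15 σ p v)).sum := by
      intro M
      rw [← Multiset.sum_map_mul_left]
      congr 1
      apply Multiset.map_congr rfl
      intro p _
      rw [phi_prod_eq σ hσ x y p.1 p.2]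
      simp only [chi15, MonoidHom.coe_mk, OneHom.coe_mk, hw]
      rfl
    rw [expand C, expand D] at hxy
    exact mul_left_cancel₀ hK hxy
  -- Step 2: linear independence
  set S := (C + D).toFinset with hS
  have li : LinearIndependent ℝ (fun p : ℝ × ℝ => ⇑(chi15 σ p)) :=
    (linearIndependent_monoidHom (Multiplicative (ℝ × ℝ)) ℝ).comp
      (chi15 σ) (chi15_injective hσ)
  have hsum0 : ∑ p ∈ S, (((C.count p : ℝ) - (D.count p : ℝ)) * w p) • ⇑(chi15 σ p) = 0 := by
    funext v
    simp only [Finset.sum_apply, Pi.smul_apply, smul_eq_mul, Pi.zero_apply]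
    have count_sum : ∀ (M : Multiset (ℝ × ℝ)), M ≤ C + D →
        (M.map (fun p => w p * chi15 σ p v)).sum =
        ∑ p ∈ S, (M.count p : ℝ) * (w p * chi15 σ p v) := by
      intro M hM
      rw [Finset.sum_multiset_map_count]
      rw [Finset.sum_subset (Multiset.toFinset_subset.mpr (Multiset.subset_of_le hM))]
      · apply Finset.sum_congr rfl; intro p _; simp [nsmul_eq_mul]
      · intro p _ hp
        simp [Multiset.count_eq_zero_of_notMem (by simpa using hp)]
    have := key v
    rw [count_sum C (Multiset.le_add_right C D), count_sum D (Multiset.le_add_left D C)] at this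
    have : ∑ p ∈ S, ((C.count p : ℝ) * (w p * chi15 σ p v)
        - (D.count p : ℝ) * (w p * chi15 σ p v)) = 0 := by
      rw [Finset.sum_sub_distrib, this, sub_self]
    rw [← this]
    apply Finset.sum_congr rfl
    intro p _
    ring
  have hcoeff := linearIndependent_iff'.mp li S
    (fun p => ((C.count p : ℝ) - (D.count p : ℝ)) * w p) hsum0
  ext a
  by_cases ha : a ∈ S
  · have := hcoeff a ha
    have hwpos : w a ≠ 0 := by simp only [hw]; positivity
    have : (C.count a : ℝ) - (D.count a : ℝ) = 0 := by
      rcases mul_eq_zero.mp this with h' | h'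
      · exact h'
      · exact absurd h' hwpos
    exact_mod_cast sub_eq_zero.mp this
  · simp only [hS, Multiset.mem_toFinset, Multiset.mem_add, not_or] at ha
    rw [Multiset.count_eq_zero_of_notMem ha.1, Multiset.count_eq_zero_of_notMem ha.2]
end
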